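/- Fix an integer G ≥ 1 and a real P > 0. Then lim_{N→∞} N · ∫_0^∞ log(1+Px) · G N e^{−Nx} (1−e^{−Nx})^{G−1} dx = P · Σ_{k=1}^G 1/k, the limit taken along positive integers N → ∞. That is, the total throughput of the best-among-worst-users multi-group scheduler converges to P times the G-th harmonic number, and hence is Θ(log G) in the number of groups G. -/

import Mathlib

open Real Set Finset Filter

open MeasureTheory

lemma xexp_int : IntegrableOn (fun x : ℝ => x * Real.exp (-x)) (Ioi 0) := by
  have h := Real.GammaIntegral_convergent (s := 2) (by norm_num)
  refine h.congr_fun (fun x hx => ?_) measurableSet_Ioi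
  rw [show (2:ℝ) - 1 = 1 by norm_num]; simp only [Real.rpow_one]; ring

lemma hasDerivAt_F (G : ℕ) (y : ℝ) :
    HasDerivAt (fun y : ℝ => -(y * (1 - (1 - Real.exp (-y))^G)) +
        ∑ k ∈ Finset.range G, (1 - Real.exp (-y))^(k+1)/(k+1))
      (y * ((G:ℝ) * Real.exp (-y) * (1 - Real.exp (-y))^(G-1))) y := by
  set v : ℝ := 1 - Real.exp (-y) with hv
  have hvd : HasDerivAt (fun y : ℝ => 1 - Real.exp (-y)) (Real.exp (-y)) y := by
    simpa using ((Real.hasDerivAt_exp (-y)).comp y ((hasDerivAt_id y).neg)).const_sub 1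
  have h1 : HasDerivAt (fun y : ℝ => -(y * (1 - (1 - Real.exp (-y))^G)))
      (-((1 - v^G) + y * (-((G:ℝ) * v^(G-1) * Real.exp (-y))))) y := by
    simpa using (((hasDerivAt_id' y).fun_mul (((hvd.fun_pow G)).const_sub 1))).fun_neg
  have h2 : HasDerivAt (fun y : ℝ => ∑ k ∈ Finset.range G, (1 - Real.exp (-y))^(k+1)/(k+1))
      (∑ k ∈ Finset.range G, v^k * Real.exp (-y)) y := by
    refine HasDerivAt.fun_sum (fun k _ => ?_)
    have h3 := (hvd.fun_pow (k+1)).div_const ((k:ℝ)+1)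
    have hk : ((k:ℝ)+1) ≠ 0 := by positivity
    refine h3.congr_deriv ?_
    have hk1 : (1:ℝ) + k ≠ 0 := by positivity
    simp only [Nat.add_sub_cancel, Nat.cast_add, Nat.cast_one]
    field_simp
    ring
  have h4 := h1.fun_add h2
  refine h4.congr_deriv ?_
  have hgeom : (∑ k ∈ Finset.range G, v^k) * (1 - v) = 1 - v^G := by
    have := geom_sum_mul v G
    linarith
  have hev : Real.exp (-y) = 1 - v := by rw [hv]; ring
  rw [← Finset.sum_mul, hev]
  nlinarith [hgeom]

lemma g_int (G : ℕ) : IntegrableOn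
    (fun y : ℝ => y * ((G:ℝ) * Real.exp (-y) * (1 - Real.exp (-y))^(G-1))) (Ioi 0) := by
  refine Integrable.mono (xexp_int.const_mul (G:ℝ)) ?_ ?_
  · exact (Continuous.mul continuous_id (((continuous_const.mul
      (Real.continuous_exp.comp continuous_neg))).mul
      ((continuous_const.sub (Real.continuous_exp.comp continuous_neg)).pow _))).aestronglyMeasurable
  · filter_upwards [ae_restrict_mem measurableSet_Ioi] with y hy
    have hy0 : (0:ℝ) < y := hy
    have he : Real.exp (-y) ≤ 1 := Real.exp_le_one_iff.mpr (by linarith)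
    have he0 : 0 < Real.exp (-y) := Real.exp_pos _
    have hv0 : 0 ≤ 1 - Real.exp (-y) := by linarith
    have hv1 : (1 - Real.exp (-y))^(G-1) ≤ 1 := pow_le_one₀ hv0 (by linarith)
    rw [Real.norm_eq_abs, Real.norm_eq_abs, abs_of_nonneg (by positivity),
      abs_of_nonneg (by positivity)]
    calc y * ((G:ℝ) * Real.exp (-y) * (1 - Real.exp (-y))^(G-1))
        ≤ y * ((G:ℝ) * Real.exp (-y) * 1) := by
          apply mul_le_mul_of_nonneg_left _ hy0.le
          apply mul_le_mul_of_nonneg_left hv1 (by positivity)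
      _ = (G:ℝ) * (y * Real.exp (-y)) := by ring

lemma J_eq (G : ℕ) :
    ∫ y in Ioi (0:ℝ), y * ((G:ℝ) * Real.exp (-y) * (1 - Real.exp (-y))^(G-1))
      = ∑ k ∈ Finset.range G, 1/((k:ℝ)+1) := by
  have key := integral_Ioi_of_hasDerivAt_of_tendsto (a := (0:ℝ))
    (f := fun y : ℝ => -(y * (1 - (1 - Real.exp (-y))^G)) +
        ∑ k ∈ Finset.range G, (1 - Real.exp (-y))^(k+1)/(k+1))
    (f' := fun y => y * ((G:ℝ) * Real.exp (-y) * (1 - Real.exp (-y))^(G-1)))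
    (m := ∑ k ∈ Finset.range G, 1/((k:ℝ)+1))
    ((hasDerivAt_F G 0).continuousAt.continuousWithinAt)
    (fun x _ => hasDerivAt_F G x) (g_int G) ?_
  · rw [key]; simp
  · -- tendsto at top
    have h1 : Tendsto (fun y : ℝ => -(y * (1 - (1 - Real.exp (-y))^G))) atTop (nhds 0) := by
      rw [show (0:ℝ) = -0 by ring]
      apply Tendsto.neg
      have hb : Tendsto (fun y : ℝ => (G:ℝ) * (y * Real.exp (-y))) atTop (nhds 0) := by
        have := Real.tendsto_pow_mul_exp_neg_atTop_nhds_zero 1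
        simpa using this.const_mul (G:ℝ)
      refine squeeze_zero' ?_ ?_ hb
      · filter_upwards [eventually_ge_atTop (0:ℝ)] with y hy
        have he : Real.exp (-y) ≤ 1 := Real.exp_le_one_iff.mpr (by linarith)
        have he0 := Real.exp_pos (-y)
        have hv1 : (1 - Real.exp (-y))^G ≤ 1 := pow_le_one₀ (by linarith) (by linarith)
        exact mul_nonneg hy (by linarith)
      · filter_upwards [eventually_ge_atTop (0:ℝ)] with y hy
        have he : Real.exp (-y) ≤ 1 := Real.exp_le_one_iff.mpr (by linarith)
        have he0 : 0 < Real.exp (-y) := Real.exp_pos _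
        set v := 1 - Real.exp (-y) with hv
        have hgeom : 1 - v^G = (∑ k ∈ Finset.range G, v^k) * Real.exp (-y) := by
          have := geom_sum_mul v G
          have hev : Real.exp (-y) = 1 - v := by rw [hv]; ring
          rw [hev]; linarith
        have hsum : (∑ k ∈ Finset.range G, v^k) ≤ (G:ℝ) := by
          calc (∑ k ∈ Finset.range G, v^k) ≤ ∑ k ∈ Finset.range G, 1 := by
                apply Finset.sum_le_sum
                intro k _
                exact pow_le_one₀ (by linarith) (by linarith)

            _ = (G:ℝ) := by simp
        rw [hgeom]
        calc y * ((∑ k ∈ Finset.range G, v^k) * Real.exp (-y))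
            ≤ y * ((G:ℝ) * Real.exp (-y)) := by
              apply mul_le_mul_of_nonneg_left _ hy
              exact mul_le_mul_of_nonneg_right hsum he0.le
          _ = (G:ℝ) * (y * Real.exp (-y)) := by ring
    have h2 : Tendsto (fun y : ℝ => ∑ k ∈ Finset.range G, (1 - Real.exp (-y))^(k+1)/(k+1))
        atTop (nhds (∑ k ∈ Finset.range G, 1/((k:ℝ)+1))) := by
      apply tendsto_finset_sum
      intro k _
      have : Tendsto (fun y : ℝ => (1 - Real.exp (-y))^(k+1)) atTop (nhds 1) := by
        have := (Real.tendsto_exp_neg_atTop_nhds_zero).const_sub 1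
        simpa using this.pow (k+1)
      have := this.div_const ((k:ℝ)+1)
      simpa using this
    simpa using h1.add h2


noncomputable def auxF (G : ℕ) (P : ℝ) (n : ℕ) (y : ℝ) : ℝ :=
  Real.log (1 + P * y / n) * ((G:ℝ) * n * Real.exp (-y) * (1 - Real.exp (-y))^(G-1))

noncomputable def auxf (G : ℕ) (P : ℝ) (y : ℝ) : ℝ :=
  P * y * ((G:ℝ) * Real.exp (-y) * (1 - Real.exp (-y))^(G-1))

/-- Fix `G ≥ 1` and `P > 0`. Then
`lim_{N→∞} N ∫_0^∞ log(1+Px) · G N e^{−Nx}(1−e^{−Nx})^{G−1} dx = P Σ_{k=1}^G 1/k`: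
the best-among-worst-users multi-group throughput tends to `P` times the `G`-th
harmonic number, hence is `Θ(log G)`. -/
theorem best_among_worst_throughput_limit (G : ℕ) (hG : 1 ≤ G) (P : ℝ) (hP : 0 < P) :
    Tendsto (fun N : ℕ =>
        (N : ℝ) * ∫ x in Ioi (0 : ℝ), Real.log (1 + P * x) *
          ((G : ℝ) * (N : ℝ) * Real.exp (-(N : ℝ) * x) *
            (1 - Real.exp (-(N : ℝ) * x)) ^ (G - 1)))
      atTop (nhds (P * ∑ k ∈ Finset.Icc 1 G, 1 / (k : ℝ))) := by
  classical
  -- dominated convergence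
  have hDCT : Tendsto (fun n => ∫ y in Ioi (0:ℝ), auxF G P n y) atTop
      (nhds (∫ y in Ioi (0:ℝ), auxf G P y)) := by
    apply MeasureTheory.tendsto_integral_of_dominated_convergence
      (bound := fun y => P * y * ((G:ℝ) * Real.exp (-y)))
    · intro n
      have : Measurable (auxF G P n) := by
        unfold auxF
        apply Measurable.mul
        · exact Real.measurable_log.comp (by fun_prop)
        · fun_prop
      exact this.aestronglyMeasurable
    · have h := xexp_int.const_mul (P*G)
      exact MeasureTheory.IntegrableOn.congr_fun h (fun x _ => by ring) measurableSet_Ioi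
    · intro n
      filter_upwards [MeasureTheory.ae_restrict_mem measurableSet_Ioi] with y hy
      have hy0 : (0:ℝ) < y := hy
      have he0 : (0:ℝ) < Real.exp (-y) := Real.exp_pos _
      have he1 : Real.exp (-y) ≤ 1 := Real.exp_le_one_iff.mpr (by linarith)
      have hv0 : (0:ℝ) ≤ 1 - Real.exp (-y) := by linarith
      have hdiv : 0 ≤ P * y / n := div_nonneg (by positivity) (Nat.cast_nonneg n)
      have hlog0 : 0 ≤ Real.log (1 + P * y / n) := Real.log_nonneg (by linarith)
      have hvpow0 : (0:ℝ) ≤ (1 - Real.exp (-y))^(G-1) := pow_nonneg hv0 _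
      have hvpow1 : (1 - Real.exp (-y))^(G-1) ≤ 1 := pow_le_one₀ hv0 (by linarith)
      have hFnn : 0 ≤ auxF G P n y := by
        unfold auxF
        exact mul_nonneg hlog0 (mul_nonneg (mul_nonneg (by positivity) he0.le) hvpow0)
      rw [Real.norm_eq_abs, abs_of_nonneg hFnn]
      rcases Nat.eq_zero_or_pos n with rfl | hn
      · have h0 : auxF G P 0 y = 0 := by simp [auxF]
        rw [h0]
        positivity
      · have hn0 : (0:ℝ) < (n:ℝ) := by exact_mod_cast hn
        have hlog : Real.log (1 + P * y / n) ≤ P * y / n := by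
          have := Real.log_le_sub_one_of_pos (x := 1 + P * y / n) (by linarith)
          linarith
        unfold auxF
        calc Real.log (1 + P * y / n) * ((G:ℝ) * n * Real.exp (-y) * (1 - Real.exp (-y))^(G-1))
            ≤ (P * y / n) * ((G:ℝ) * n * Real.exp (-y) * (1 - Real.exp (-y))^(G-1)) := by
              apply mul_le_mul_of_nonneg_right hlog
              exact mul_nonneg (mul_nonneg (by positivity) he0.le) hvpow0
          _ ≤ (P * y / n) * ((G:ℝ) * n * Real.exp (-y) * 1) := by
              apply mul_le_mul_of_nonneg_left _ hdiv
              apply mul_le_mul_of_nonneg_left hvpow1 (by positivity)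
          _ = P * y * ((G:ℝ) * Real.exp (-y)) := by field_simp
    · filter_upwards [MeasureTheory.ae_restrict_mem measurableSet_Ioi] with y hy
      have hy0 : (0:ℝ) < y := hy
      have hlog : Tendsto (fun n : ℕ => (n:ℝ) * Real.log (1 + P * y / n)) atTop (nhds (P*y)) := by
        have h := (Real.tendsto_one_add_div_pow_exp (P*y)).log (Real.exp_ne_zero _)
        rw [Real.log_exp] at h
        refine h.congr (fun n => ?_)
        rw [Real.log_pow]
      have h2 := hlog.mul_const ((G:ℝ) * Real.exp (-y) * (1 - Real.exp (-y))^(G-1))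
      have hfy : auxf G P y = (P*y) * ((G:ℝ) * Real.exp (-y) * (1 - Real.exp (-y))^(G-1)) := by
        unfold auxf; ring
      rw [hfy]
      refine h2.congr (fun n => ?_)
      unfold auxF; ring
  -- value of the limit integral
  have hval : ∫ y in Ioi (0:ℝ), auxf G P y = P * ∑ k ∈ Finset.Icc 1 G, 1 / (k:ℝ) := by
    have h1 : ∫ y in Ioi (0:ℝ), auxf G P y
        = P * ∫ y in Ioi (0:ℝ), y * ((G:ℝ) * Real.exp (-y) * (1 - Real.exp (-y))^(G-1)) := by
      rw [← MeasureTheory.integral_const_mul]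
      refine MeasureTheory.setIntegral_congr_fun measurableSet_Ioi (fun x _ => ?_)
      unfold auxf; ring
    rw [h1, J_eq]
    congr 1
    rw [show Finset.Icc 1 G = Finset.Ico 1 (G+1) by rw [Finset.Ico_add_one_right_eq_Icc]]
    rw [Finset.sum_Ico_eq_sum_range]
    simp only [Nat.add_sub_cancel]
    refine Finset.sum_congr rfl (fun k _ => ?_)
    push_cast; rw [add_comm]
  rw [← hval]
  -- identify the sequence with ∫ auxF n eventually
  refine Tendsto.congr' ?_ hDCT
  filter_upwards [eventually_ge_atTop 1] with n hn
  have hn0 : (0:ℝ) < (n:ℝ) := by exact_mod_cast hn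
  have hcomp := MeasureTheory.integral_comp_mul_left_Ioi (g := auxF G P n) 0 hn0
  have heq : (fun x : ℝ => auxF G P n ((n:ℝ) * x))
      = fun x : ℝ => Real.log (1 + P * x) *
          ((G : ℝ) * (n : ℝ) * Real.exp (-(n : ℝ) * x) *
            (1 - Real.exp (-(n : ℝ) * x)) ^ (G - 1)) := by
    funext x
    unfold auxF
    have h1 : P * ((n:ℝ) * x) / n = P * x := by field_simp
    have h2 : -((n:ℝ) * x) = -(n:ℝ) * x := by ring
    rw [h1, h2]
  rw [heq, mul_zero] at hcomp
  rw [hcomp, smul_eq_mul, ← mul_assoc, mul_inv_cancel₀ (ne_of_gt hn0), one_mul]
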